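/- For any positive integer m and complex numbers x₁ ≠ x₂, λ₁, λ₂ with λ₁ ≠ λ₂, the quantity m!·(x₁−x₂)^{m+1}/(λ₁−λ₂)^m · e^{λ₂(x₁+x₂)} · Res_{z=x₁} [ e^{(λ₁−λ₂)z} / ((z−x₁)^{m+1}(z−x₂)^{m+1}) ] equals the Baker–Akhiezer function Ψ^{(2)}_m(x,λ) = (λ₁−λ₂)^{−m}·∏_{k=m}^{1}(D − 2k/(x₁−x₂)) exp(λ₁x₁+λ₂x₂), where D = ∂/∂x₁ − ∂/∂x₂. -/

import Mathlib

open Complex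

/-- The operator `D = ∂/∂x₁ - ∂/∂x₂` acting on functions of two complex variables. -/
noncomputable def Dop (f : ℂ → ℂ → ℂ) : ℂ → ℂ → ℂ :=
  fun x₁ x₂ => deriv (fun s => f s x₂) x₁ - deriv (fun s => f x₁ s) x₂

/-- `BAfac lam₁ lam₂ k = (D - 2k/(x₁-x₂)) ⋯ (D - 2/(x₁-x₂)) exp(λ₁x₁+λ₂x₂)`,
the product of first-order factors applied left to right (the factor with the
smallest coefficient acting first on the exponential). -/
noncomputable def BAfac (lam₁ lam₂ : ℂ) : ℕ → (ℂ → ℂ → ℂ)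
  | 0 => fun x₁ x₂ => Complex.exp (lam₁ * x₁ + lam₂ * x₂)
  | (k+1) => fun x₁ x₂ =>
      Dop (BAfac lam₁ lam₂ k) x₁ x₂
        - (2 * ((k : ℂ) + 1) / (x₁ - x₂)) * BAfac lam₁ lam₂ k x₁ x₂

/-- The two-particle rational Baker–Akhiezer function
`Ψ^{(2)}_m = (λ₁-λ₂)^{-m} (D - 2m/(x₁-x₂))⋯(D - 2/(x₁-x₂)) exp(λ₁x₁+λ₂x₂)`. -/
noncomputable def Psi2 (m : ℕ) (lam₁ lam₂ : ℂ) : ℂ → ℂ → ℂ :=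
  fun x₁ x₂ => (lam₁ - lam₂) ^ (-(m : ℤ)) * BAfac lam₁ lam₂ m x₁ x₂
section Aux
open Finset Metric Nat

def CCn (k i : ℕ) : ℕ := (k+i).choose i * k.descFactorial i
def DDn (m k j : ℕ) : ℕ := k.choose j * (m+j).descFactorial j

lemma CCn_zero (k : ℕ) : CCn k 0 = 1 := by simp [CCn]

lemma CCn_top (k : ℕ) : CCn k (k+1) = 0 := by
  simp [CCn, Nat.descFactorial_eq_zero_iff_lt]

lemma DDn_zero (m k : ℕ) : DDn m k 0 = 1 := by simp [DDn]

lemma DDn_top (m k : ℕ) : DDn m k (k+1) = 0 := by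
  simp [DDn, Nat.choose_eq_zero_iff]

lemma choose_aux (i a : ℕ) :
    (2*i+a+2).choose (i+1) * (i+a+1) =
      (2*i+a+1).choose (i+1) * a + 2*(2*i+a+1) * ((2*i+a).choose i) := by
  have key : ((2*i+a+2).choose (i+1) * (i+a+1) : ℚ) =
      (2*i+a+1).choose (i+1) * a + 2*(2*i+a+1) * ((2*i+a).choose i) := by
    have h1 := Nat.cast_choose ℚ (show i+1 ≤ 2*i+a+2 by omega)
    have h2 := Nat.cast_choose ℚ (show i+1 ≤ 2*i+a+1 by omega)
    have h3 := Nat.cast_choose ℚ (show i ≤ 2*i+a by omega)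
    rw [show 2*i+a+2 - (i+1) = i+a+1 by omega] at h1
    rw [show 2*i+a+1 - (i+1) = i+a by omega] at h2
    rw [show 2*i+a - i = i+a by omega] at h3
    rw [h1, h2, h3]
    have e1 : ((2*i+a+2)! : ℚ) = (2*(i:ℚ)+a+2) * (2*(i:ℚ)+a+1) * (2*i+a)! := by
      rw [show 2*i+a+2 = (2*i+a)+1+1 by omega, Nat.factorial_succ, Nat.factorial_succ]
      push_cast; ring
    have e2 : ((2*i+a+1)! : ℚ) = (2*(i:ℚ)+a+1) * (2*i+a)! := by
      rw [show 2*i+a+1 = (2*i+a)+1 by omega, Nat.factorial_succ]; push_cast; ring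
    have e3 : ((i+a+1)! : ℚ) = ((i:ℚ)+a+1) * (i+a)! := by
      rw [show i+a+1 = (i+a)+1 by omega, Nat.factorial_succ]; push_cast; ring
    have e4 : ((i+1)! : ℚ) = ((i:ℚ)+1) * (i)! := by
      rw [Nat.factorial_succ]; push_cast; ring
    rw [e1, e2, e3, e4]
    have n1 : ((i+a : ℕ)! : ℚ) ≠ 0 := by exact_mod_cast Nat.factorial_ne_zero _
    have n2 : ((i : ℕ)! : ℚ) ≠ 0 := by exact_mod_cast Nat.factorial_ne_zero _
    have n3 : ((2*i+a : ℕ)! : ℚ) ≠ 0 := by exact_mod_cast Nat.factorial_ne_zero _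
    have p1 : ((i:ℚ)+1) ≠ 0 := by positivity
    have p2 : ((i:ℚ)+a+1) ≠ 0 := by positivity
    field_simp
    ring
  exact_mod_cast key

lemma CCn_rec (k i : ℕ) :
    CCn (k+1) (i+1) = CCn k (i+1) + 2*(k+i+1) * CCn k i := by
  unfold CCn
  rw [Nat.succ_descFactorial_succ, Nat.descFactorial_succ]
  rcases Nat.lt_or_ge k i with h | h
  · rw [Nat.descFactorial_eq_zero_iff_lt.2 h]; ring
  · obtain ⟨a, rfl⟩ : ∃ a, k = i + a := ⟨k - i, by omega⟩
    have := choose_aux i a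
    rw [show i+a+1+(i+1) = 2*i+a+2 by omega, show i+a+(i+1) = 2*i+a+1 by omega,
      show i+a+i = 2*i+a by omega, show i+a-i = a by omega, show i+a+1 = i+a+1 by omega]
    calc (2*i+a+2).choose (i+1) * ((i + a + 1) * (i+a).descFactorial i)
        = ((2*i+a+2).choose (i+1) * (i+a+1)) * (i+a).descFactorial i := by ring
      _ = ((2*i+a+1).choose (i+1) * a + 2*(2*i+a+1) * ((2*i+a).choose i)) * (i+a).descFactorial i := by rw [this]
      _ = _ := by ring

lemma DDn_rec (m k j : ℕ) :
    DDn m (k+1) (j+1) = DDn m k (j+1) + (m+j+1) * DDn m k j := by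
  unfold DDn
  rw [Nat.choose_succ_succ, show m+(j+1) = (m+j)+1 by omega, Nat.succ_descFactorial_succ]
  ring

lemma DDn_eq_CCn (m i : ℕ) : DDn m m i = CCn m i := by
  unfold DDn CCn
  rcases Nat.lt_or_ge m i with h | h
  · rw [Nat.choose_eq_zero_of_lt h, Nat.descFactorial_eq_zero_iff_lt.2 h]; simp
  · have d1 : ((m+i).descFactorial i : ℚ) = (m+i)! / m ! := by
      rw [eq_div_iff (by exact_mod_cast Nat.factorial_ne_zero m), mul_comm]
      have := Nat.factorial_mul_descFactorial (show i ≤ m+i by omega)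
      rw [show m+i-i = m by omega] at this
      exact_mod_cast this
    have d2 : (m.descFactorial i : ℚ) = m ! / (m-i)! := by
      rw [eq_div_iff (by exact_mod_cast Nat.factorial_ne_zero (m-i)), mul_comm]
      exact_mod_cast Nat.factorial_mul_descFactorial h
    have c1 := Nat.cast_choose ℚ (show i ≤ m+i by omega)
    rw [show m+i-i = m by omega] at c1
    have c2 := Nat.cast_choose ℚ h
    have key : (m.choose i * (m+i).descFactorial i : ℚ) = (m+i).choose i * m.descFactorial i := by
      rw [d1, d2, c1, c2]
      have n1 : ((m-i : ℕ)! : ℚ) ≠ 0 := by exact_mod_cast Nat.factorial_ne_zero _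
      have n2 : ((i : ℕ)! : ℚ) ≠ 0 := by exact_mod_cast Nat.factorial_ne_zero _
      have n3 : ((m : ℕ)! : ℚ) ≠ 0 := by exact_mod_cast Nat.factorial_ne_zero _
      field_simp
    exact_mod_cast key


lemma hasDerivAt_invpow_comp (i : ℕ) {u : ℂ → ℂ} {u' : ℂ} {s : ℂ}
    (hu : HasDerivAt u u' s) (h : u s ≠ 0) :
    HasDerivAt (fun z => ((u z)⁻¹)^i) (-(i:ℂ) * ((u s)⁻¹)^(i+1) * u') s := by
  have H := (hasDerivAt_zpow (-(i:ℤ)) (u s) (Or.inl h)).comp s hu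
  have e1 : ∀ w : ℂ, w ^ (-(i:ℤ)) = (w⁻¹)^i := by
    intro w; rw [zpow_neg, zpow_natCast, inv_pow]
  have e2 : (u s) ^ (-(i:ℤ) - 1) = ((u s)⁻¹)^(i+1) := by
    rw [show (-(i:ℤ) - 1) = -(((i+1:ℕ)):ℤ) by push_cast; ring, zpow_neg, zpow_natCast, inv_pow]
  have H' : HasDerivAt ((fun x : ℂ => x ^ (-(i:ℤ))) ∘ u) (((-(i:ℤ) : ℤ) : ℂ) * (u s) ^ (-(i:ℤ) - 1) * u') s := H
  convert H' using 1
  · funext z; simp only [Function.comp]; rw [e1]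
  · rw [e2]; push_cast; ring

lemma BAfac_eq (lam₁ lam₂ : ℂ) : ∀ (k : ℕ) (x₁ x₂ : ℂ), x₁ ≠ x₂ →
    BAfac lam₁ lam₂ k x₁ x₂ = Complex.exp (lam₁*x₁+lam₂*x₂) *
      ∑ i ∈ Finset.range (k+1),
        (-1:ℂ)^i * CCn k i * (lam₁-lam₂)^(k-i) * ((x₁-x₂)⁻¹)^i := by
  intro k
  induction k with
  | zero => intro x₁ x₂ hx; simp [BAfac, CCn_zero]
  | succ k ih =>
    intro x₁ x₂ hx
    set μ : ℂ := lam₁ - lam₂ with hμ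
    have hx' : x₁ - x₂ ≠ 0 := sub_ne_zero.2 hx
    -- the closed form of level k
    set S : ℂ → ℂ → ℂ := fun a b => ∑ i ∈ Finset.range (k+1),
        (-1:ℂ)^i * CCn k i * μ^(k-i) * ((a-b)⁻¹)^i with hS
    set E : ℂ → ℂ → ℂ := fun a b => Complex.exp (lam₁*a+lam₂*b) with hE
    -- derivative in the first variable
    have hd1 : HasDerivAt (fun s => E s x₂ * S s x₂)
        (lam₁ * E x₁ x₂ * S x₁ x₂ + E x₁ x₂ * ∑ i ∈ Finset.range (k+1),
          (-1:ℂ)^i * CCn k i * μ^(k-i) * (-(i:ℂ) * ((x₁-x₂)⁻¹)^(i+1))) x₁ := by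
      have hE1 : HasDerivAt (fun s => E s x₂) (lam₁ * E x₁ x₂) x₁ := by
        have : HasDerivAt (fun s : ℂ => lam₁*s+lam₂*x₂) lam₁ x₁ := by
          simpa using ((hasDerivAt_id x₁).const_mul lam₁).add_const (lam₂*x₂)
        simpa [hE, mul_comm] using this.cexp
      have hS1 : HasDerivAt (fun s => S s x₂)
          (∑ i ∈ Finset.range (k+1),
            (-1:ℂ)^i * CCn k i * μ^(k-i) * (-(i:ℂ) * ((x₁-x₂)⁻¹)^(i+1))) x₁ := by
        apply HasDerivAt.fun_sum
        intro i _
        have hu : HasDerivAt (fun s : ℂ => s - x₂) 1 x₁ := (hasDerivAt_id x₁).sub_const x₂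
        have := (hasDerivAt_invpow_comp i hu hx').const_mul ((-1:ℂ)^i * CCn k i * μ^(k-i))
        refine this.congr_deriv ?_
        ring
      exact hE1.mul hS1
    -- derivative in the second variable
    have hd2 : HasDerivAt (fun s => E x₁ s * S x₁ s)
        (lam₂ * E x₁ x₂ * S x₁ x₂ + E x₁ x₂ * ∑ i ∈ Finset.range (k+1),
          (-1:ℂ)^i * CCn k i * μ^(k-i) * ((i:ℂ) * ((x₁-x₂)⁻¹)^(i+1))) x₂ := by
      have hE2 : HasDerivAt (fun s => E x₁ s) (lam₂ * E x₁ x₂) x₂ := by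
        have : HasDerivAt (fun s : ℂ => lam₁*x₁+lam₂*s) lam₂ x₂ := by
          simpa using (((hasDerivAt_id x₂).const_mul lam₂).const_add (lam₁*x₁))
        simpa [hE, mul_comm] using this.cexp
      have hS2 : HasDerivAt (fun s => S x₁ s)
          (∑ i ∈ Finset.range (k+1),
            (-1:ℂ)^i * CCn k i * μ^(k-i) * ((i:ℂ) * ((x₁-x₂)⁻¹)^(i+1))) x₂ := by
        apply HasDerivAt.fun_sum
        intro i _
        have hu : HasDerivAt (fun s : ℂ => x₁ - s) (-1) x₂ := by
          simpa using (hasDerivAt_id x₂).const_sub x₁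
        have := (hasDerivAt_invpow_comp i hu hx').const_mul ((-1:ℂ)^i * CCn k i * μ^(k-i))
        refine this.congr_deriv ?_
        ring
      exact hE2.mul hS2
    -- replace BAfac by closed form inside derivatives
    have hev1 : (fun s => BAfac lam₁ lam₂ k s x₂) =ᶠ[nhds x₁] (fun s => E s x₂ * S s x₂) := by
      filter_upwards [isOpen_compl_singleton.mem_nhds (by simpa using hx : x₁ ∈ ({x₂}ᶜ : Set ℂ))]
        with s hs
      exact ih s x₂ hs
    have hev2 : (fun s => BAfac lam₁ lam₂ k x₁ s) =ᶠ[nhds x₂] (fun s => E x₁ s * S x₁ s) := by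
      filter_upwards [isOpen_compl_singleton.mem_nhds
        (by simpa using (Ne.symm hx) : x₂ ∈ ({x₁}ᶜ : Set ℂ))] with s hs
      exact ih x₁ s (Ne.symm hs)
    have hD : Dop (BAfac lam₁ lam₂ k) x₁ x₂
        = μ * (E x₁ x₂ * S x₁ x₂) + E x₁ x₂ * ∑ i ∈ Finset.range (k+1),
            (-1:ℂ)^i * CCn k i * μ^(k-i) * (-2*(i:ℂ) * ((x₁-x₂)⁻¹)^(i+1)) := by
      unfold Dop
      rw [hev1.deriv_eq, hev2.deriv_eq, hd1.deriv, hd2.deriv]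
      have hsum : (∑ i ∈ Finset.range (k+1),
            (-1:ℂ)^i * CCn k i * μ^(k-i) * (-(i:ℂ) * ((x₁-x₂)⁻¹)^(i+1)))
          - (∑ i ∈ Finset.range (k+1),
            (-1:ℂ)^i * CCn k i * μ^(k-i) * ((i:ℂ) * ((x₁-x₂)⁻¹)^(i+1)))
          = ∑ i ∈ Finset.range (k+1),
            (-1:ℂ)^i * CCn k i * μ^(k-i) * (-2*(i:ℂ) * ((x₁-x₂)⁻¹)^(i+1)) := by
        rw [← Finset.sum_sub_distrib]
        exact Finset.sum_congr rfl fun i _ => by ring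
      linear_combination (E x₁ x₂) * hsum + (S x₁ x₂ * E x₁ x₂) * hμ
    -- now the final sum identity
    show Dop (BAfac lam₁ lam₂ k) x₁ x₂ - 2*((k:ℂ)+1)/(x₁-x₂) * BAfac lam₁ lam₂ k x₁ x₂ = _
    rw [hD, ih x₁ x₂ hx]
    have key : (∑ i ∈ Finset.range (k+2),
          (-1:ℂ)^i * CCn (k+1) i * μ^(k+1-i) * ((x₁-x₂)⁻¹)^i)
        = μ * S x₁ x₂
          + (∑ i ∈ Finset.range (k+1),
              (-1:ℂ)^i * CCn k i * μ^(k-i) * (-2*(i:ℂ) * ((x₁-x₂)⁻¹)^(i+1)))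
          - 2*((k:ℂ)+1)/(x₁-x₂) * S x₁ x₂ := by
      set T : ℂ := (x₁-x₂)⁻¹ with hT
      have hTdiv : (2*((k:ℂ)+1)/(x₁-x₂)) = 2*((k:ℂ)+1) * T := by
        rw [hT, div_eq_mul_inv]
      -- expand LHS
      rw [Finset.sum_range_succ']
      have hA0 : (-1:ℂ)^0 * CCn (k+1) 0 * μ^(k+1-0) * T^0 = μ^(k+1) := by
        simp [CCn_zero]
      have hstep : ∀ i ∈ Finset.range (k+1),
          (-1:ℂ)^(i+1) * CCn (k+1) (i+1) * μ^(k+1-(i+1)) * T^(i+1)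
          = (-1:ℂ)^(i+1) * CCn k (i+1) * μ^(k-i) * T^(i+1)
            + (-1:ℂ)^i * CCn k i * μ^(k-i) * (-2*((k:ℂ)+(i:ℂ)+1) * T^(i+1)) := by
        intro i _
        have : ((CCn (k+1) (i+1) : ℂ)) = CCn k (i+1) + 2*((k:ℂ)+(i:ℂ)+1) * CCn k i := by
          have := CCn_rec k i
          push_cast [this]; ring
        rw [Nat.succ_sub_succ, this]; ring
      rw [Finset.sum_congr rfl hstep, Finset.sum_add_distrib, hA0]
      -- first piece equals μ * S - μ^(k+1)   shifted
      have hB1 : (∑ i ∈ Finset.range (k+1),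
            (-1:ℂ)^(i+1) * CCn k (i+1) * μ^(k-i) * T^(i+1)) + μ^(k+1)
          = μ * S x₁ x₂ := by
        rw [hS]
        show _ = μ * ∑ i ∈ Finset.range (k+1), (-1:ℂ)^i * CCn k i * μ^(k-i) * T^i
        rw [Finset.sum_range_succ, CCn_top, Finset.mul_sum, Finset.sum_range_succ']
        push_cast
        rw [show ((-1:ℂ))^(k+1) * 0 * μ^(k-k) * T^(k+1) = 0 by ring, add_zero]
        rw [add_comm (∑ i ∈ Finset.range k, (-1:ℂ)^(i+1) * CCn k (i+1) * μ^(k-i) * T^(i+1)) _,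
          add_comm (∑ i ∈ Finset.range k,
            μ * ((-1:ℂ)^(i+1) * CCn k (i+1) * μ^(k-(i+1)) * T^(i+1))) _]
        congr 1
        · simp [CCn_zero]; ring
        · apply Finset.sum_congr rfl
          intro i hi
          have hik : i < k := Finset.mem_range.1 hi
          rw [show k - i = (k-(i+1))+1 by omega]
          ring
      -- second piece
      have hB2 : (∑ i ∈ Finset.range (k+1),
            (-1:ℂ)^i * CCn k i * μ^(k-i) * (-2*((k:ℂ)+(i:ℂ)+1) * T^(i+1)))
          = (∑ i ∈ Finset.range (k+1),
              (-1:ℂ)^i * CCn k i * μ^(k-i) * (-2*(i:ℂ) * T^(i+1)))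
            - 2*((k:ℂ)+1) * T * S x₁ x₂ := by
        rw [hS]
        show _ = _ - 2*((k:ℂ)+1) * T * ∑ i ∈ Finset.range (k+1),
            (-1:ℂ)^i * CCn k i * μ^(k-i) * T^i
        rw [Finset.mul_sum, ← Finset.sum_sub_distrib]
        apply Finset.sum_congr rfl
        intro i _
        ring
      rw [hTdiv]
      linear_combination hB1 + hB2
    rw [key]
    ring


lemma iteratedDeriv_g (m : ℕ) (μ x₂ : ℂ) : ∀ (k : ℕ) (z : ℂ), z ≠ x₂ →
    iteratedDeriv k (fun w => Complex.exp (μ*w) * ((w - x₂)⁻¹)^(m+1)) z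
      = Complex.exp (μ*z) * ∑ j ∈ Finset.range (k+1),
          (-1:ℂ)^j * DDn m k j * μ^(k-j) * ((z-x₂)⁻¹)^(m+1+j) := by
  intro k
  induction k with
  | zero => intro z hz; simp [DDn_zero]
  | succ k ih =>
    intro z hz
    rw [iteratedDeriv_succ]
    have hev : (iteratedDeriv k (fun w => Complex.exp (μ*w) * ((w - x₂)⁻¹)^(m+1)))
        =ᶠ[nhds z] (fun w => Complex.exp (μ*w) * ∑ j ∈ Finset.range (k+1),
          (-1:ℂ)^j * DDn m k j * μ^(k-j) * ((w-x₂)⁻¹)^(m+1+j)) := by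
      filter_upwards [isOpen_compl_singleton.mem_nhds (by simpa using hz : z ∈ ({x₂}ᶜ : Set ℂ))]
        with w hw
      exact ih w hw
    rw [hev.deriv_eq]
    have hz' : z - x₂ ≠ 0 := sub_ne_zero.2 hz
    have hE : HasDerivAt (fun w => Complex.exp (μ*w)) (μ * Complex.exp (μ*z)) z := by
      have : HasDerivAt (fun w : ℂ => μ*w) μ z := by
        simpa using (hasDerivAt_id z).const_mul μ
      simpa [mul_comm] using this.cexp
    have hSd : HasDerivAt (fun w => ∑ j ∈ Finset.range (k+1),
          (-1:ℂ)^j * DDn m k j * μ^(k-j) * ((w-x₂)⁻¹)^(m+1+j))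
        (∑ j ∈ Finset.range (k+1),
          (-1:ℂ)^j * DDn m k j * μ^(k-j) * (-((m:ℂ)+1+j) * ((z-x₂)⁻¹)^(m+2+j))) z := by
      apply HasDerivAt.fun_sum
      intro j _
      have hu : HasDerivAt (fun w : ℂ => w - x₂) 1 z := (hasDerivAt_id z).sub_const x₂
      have := (hasDerivAt_invpow_comp (m+1+j) hu hz').const_mul
        ((-1:ℂ)^j * DDn m k j * μ^(k-j))
      refine this.congr_deriv ?_
      push_cast
      rw [show m+1+j+1 = m+2+j by omega]
      ring
    rw [(hE.fun_mul hSd).deriv]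
    -- now the sum identity
    rw [Finset.mul_sum, Finset.mul_sum, Finset.mul_sum, Finset.sum_range_succ' _ (k+1)]
    have hstep : ∀ j ∈ Finset.range (k+1),
        Complex.exp (μ*z) * ((-1:ℂ)^(j+1) * DDn m (k+1) (j+1) * μ^(k+1-(j+1)) * ((z-x₂)⁻¹)^(m+1+(j+1)))
        = Complex.exp (μ*z) * ((-1:ℂ)^(j+1) * DDn m k (j+1) * μ^(k-j) * ((z-x₂)⁻¹)^(m+2+j))
          + Complex.exp (μ*z) * ((-1:ℂ)^j * DDn m k j * μ^(k-j) * (-((m:ℂ)+1+j) * ((z-x₂)⁻¹)^(m+2+j))) := by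
      intro j _
      have : ((DDn m (k+1) (j+1) : ℂ)) = DDn m k (j+1) + ((m:ℂ)+j+1) * DDn m k j := by
        have := DDn_rec m k j
        push_cast [this]; ring
      rw [Nat.succ_sub_succ, this, show m+1+(j+1) = m+2+j by omega]
      ring
    rw [Finset.sum_congr rfl hstep, Finset.sum_add_distrib]
    -- match pieces
    have hB1 : (∑ j ∈ Finset.range (k+1),
          Complex.exp (μ*z) * ((-1:ℂ)^(j+1) * DDn m k (j+1) * μ^(k-j) * ((z-x₂)⁻¹)^(m+2+j)))
        + Complex.exp (μ*z) * ((-1:ℂ)^0 * DDn m (k+1) 0 * μ^(k+1-0) * ((z-x₂)⁻¹)^(m+1+0))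
        = ∑ j ∈ Finset.range (k+1),
            μ * Complex.exp (μ*z) * ((-1:ℂ)^j * DDn m k j * μ^(k-j) * ((z-x₂)⁻¹)^(m+1+j)) := by
      rw [Finset.sum_range_succ, DDn_top, Finset.sum_range_succ']
      push_cast
      rw [show Complex.exp (μ*z) * ((-1:ℂ)^(k+1) * 0 * μ^(k-k) * ((z-x₂)⁻¹)^(m+2+k)) = 0 by ring,
        add_zero]
      rw [add_comm (∑ j ∈ Finset.range k, _) _, add_comm (∑ j ∈ Finset.range k, _) _]
      congr 1
      · simp [DDn_zero]; ring_nf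
      · apply Finset.sum_congr rfl
        intro j hj
        have hjk : j < k := Finset.mem_range.1 hj
        rw [show k - j = (k-(j+1))+1 by omega, show m+1+(j+1) = m+2+j by omega]
        ring
    linear_combination -hB1


lemma circle_formula (m : ℕ) (x₁ x₂ μ : ℂ) (ε : ℝ) (hε : 0 < ε)
    (hε' : ε < ‖x₁ - x₂‖) :
    (2 * ↑Real.pi * I)⁻¹ *
        (∮ z in C(x₁, ε), Complex.exp (μ * z) / ((z - x₁)^(m+1) * (z - x₂)^(m+1)))
      = (m.factorial : ℂ)⁻¹ *
        iteratedDeriv m (fun w => Complex.exp (μ*w) * ((w - x₂)⁻¹)^(m+1)) x₁ := by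
  set g : ℂ → ℂ := fun w => Complex.exp (μ*w) * ((w - x₂)⁻¹)^(m+1) with hg
  have hne : ∀ z ∈ closedBall x₁ ε, z ≠ x₂ := by
    intro z hz
    intro h
    rw [mem_closedBall, Complex.dist_eq] at hz
    have : ‖x₁ - x₂‖ ≤ ε := by
      calc ‖x₁ - x₂‖ = ‖z - x₁‖ := by rw [h]; exact norm_sub_rev _ _
        _ ≤ ε := hz
    linarith
  have hd : DifferentiableOn ℂ g (closedBall x₁ ε) := by
    intro z hz
    have h1 : DifferentiableAt ℂ (fun w : ℂ => Complex.exp (μ*w)) z :=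
      ((differentiableAt_id.const_mul μ)).cexp
    have h2 : DifferentiableAt ℂ (fun w : ℂ => ((w - x₂)⁻¹)^(m+1)) z := by
      exact (((differentiableAt_id.sub_const x₂)).inv (sub_ne_zero.2 (hne z hz))).pow _
    exact (h1.mul h2).differentiableWithinAt
  set R : NNReal := ⟨ε, hε.le⟩ with hR
  have hRc : (R : ℝ) = ε := rfl
  have hp : HasFPowerSeriesOnBall g (cauchyPowerSeries g x₁ R) x₁ R := by
    apply DifferentiableOn.hasFPowerSeriesOnBall
    · rwa [hRc]
    · exact_mod_cast hε
  have hfs := hp.factorial_smul (1:ℂ) m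
  have hifd : iteratedFDeriv ℂ m g x₁ (fun _ => (1:ℂ)) = iteratedDeriv m g x₁ := by
    rw [iteratedFDeriv_apply_eq_iteratedDeriv_mul_prod]
    simp
  have hcps := cauchyPowerSeries_apply g x₁ R m 1
  rw [hcps, hifd] at hfs
  -- integrand equality
  have hint : (∮ z in C(x₁, (R:ℝ)), ((1:ℂ) / (z - x₁)) ^ m • (z - x₁)⁻¹ • g z)
      = ∮ z in C(x₁, ε), Complex.exp (μ * z) / ((z - x₁)^(m+1) * (z - x₂)^(m+1)) := by
    rw [hRc]
    apply circleIntegral.integral_congr hε.le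
    intro z hz
    have hz1 : z ≠ x₁ := by
      intro h
      rw [mem_sphere_iff_norm, h] at hz
      simp at hz
      linarith
    have hz2 : z ≠ x₂ := hne z (sphere_subset_closedBall hz)
    have d1 : z - x₁ ≠ 0 := sub_ne_zero.2 hz1
    have d2 : z - x₂ ≠ 0 := sub_ne_zero.2 hz2
    show ((1:ℂ) / (z - x₁)) ^ m * ((z - x₁)⁻¹ * g z)
      = Complex.exp (μ * z) / ((z - x₁)^(m+1) * (z - x₂)^(m+1))
    rw [hg]
    simp only [one_div, inv_pow, div_eq_mul_inv, mul_inv]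
    generalize z - x₁ = a
    generalize z - x₂ = b
    ring
  rw [hint] at hfs
  -- conclude
  have hfac : ((m.factorial : ℂ)) ≠ 0 := by exact_mod_cast m.factorial_ne_zero
  rw [nsmul_eq_mul] at hfs
  rw [smul_eq_mul] at hfs
  rw [← hfs, ← mul_assoc, inv_mul_cancel₀ hfac, one_mul]


end Aux

theorem residue_formula_Psi2 (m : ℕ) (hm : 0 < m) (x₁ x₂ lam₁ lam₂ : ℂ)
    (hx : x₁ ≠ x₂) (hl : lam₁ ≠ lam₂)
    (ε : ℝ) (hε : 0 < ε) (hε' : ε < ‖x₁ - x₂‖) :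
    (m.factorial : ℂ) * (x₁ - x₂) ^ (m + 1) / (lam₁ - lam₂) ^ m
        * Complex.exp (lam₂ * (x₁ + x₂))
        * ((2 * Real.pi * Complex.I)⁻¹ *
            ∮ z in C(x₁, ε),
              Complex.exp ((lam₁ - lam₂) * z) / ((z - x₁) ^ (m + 1) * (z - x₂) ^ (m + 1)))
      = Psi2 m lam₁ lam₂ x₁ x₂ := by
  have hμ0 : lam₁ - lam₂ ≠ 0 := sub_ne_zero.2 hl
  have ht0 : x₁ - x₂ ≠ 0 := sub_ne_zero.2 hx
  have hfac : ((m.factorial : ℕ) : ℂ) ≠ 0 := by exact_mod_cast m.factorial_ne_zero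
  rw [circle_formula m x₁ x₂ (lam₁-lam₂) ε hε hε',
    iteratedDeriv_g m (lam₁-lam₂) x₂ m x₁ hx]
  unfold Psi2
  rw [BAfac_eq lam₁ lam₂ m x₁ x₂ hx]
  have hsum1 : (∑ j ∈ Finset.range (m+1),
        (-1:ℂ)^j * DDn m m j * (lam₁-lam₂)^(m-j) * ((x₁-x₂)⁻¹)^(m+1+j))
      = ∑ j ∈ Finset.range (m+1),
        (-1:ℂ)^j * CCn m j * (lam₁-lam₂)^(m-j) * ((x₁-x₂)⁻¹)^(m+1+j) :=
    Finset.sum_congr rfl fun j _ => by rw [DDn_eq_CCn]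
  rw [hsum1]
  rw [show (lam₁-lam₂)^(-(m:ℤ)) = ((lam₁-lam₂)^m)⁻¹ by rw [zpow_neg, zpow_natCast]]
  have hexp : Complex.exp (lam₂*(x₁+x₂)) * Complex.exp ((lam₁-lam₂)*x₁)
      = Complex.exp (lam₁*x₁+lam₂*x₂) := by
    rw [← Complex.exp_add]; congr 1; ring
  have hpow : ∀ j : ℕ, (x₁-x₂)^(m+1) * ((x₁-x₂)⁻¹)^(m+1+j) = ((x₁-x₂)⁻¹)^j := by
    intro j
    rw [pow_add ((x₁-x₂)⁻¹) (m+1) j, ← mul_assoc, ← mul_pow, mul_inv_cancel₀ ht0, one_pow, one_mul]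
  have key : (x₁-x₂)^(m+1) * (∑ j ∈ Finset.range (m+1),
        (-1:ℂ)^j * CCn m j * (lam₁-lam₂)^(m-j) * ((x₁-x₂)⁻¹)^(m+1+j))
      = ∑ j ∈ Finset.range (m+1),
        (-1:ℂ)^j * CCn m j * (lam₁-lam₂)^(m-j) * ((x₁-x₂)⁻¹)^j := by
    rw [Finset.mul_sum]
    refine Finset.sum_congr rfl fun j _ => ?_
    linear_combination ((-1:ℂ)^j * CCn m j * (lam₁-lam₂)^(m-j)) * hpow j
  have hm' : ((m.factorial : ℕ) : ℂ) * (((m.factorial : ℕ) : ℂ))⁻¹ = 1 :=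
    mul_inv_cancel₀ hfac
  rw [div_eq_mul_inv]
  linear_combination (((lam₁-lam₂)^m)⁻¹ * Complex.exp (lam₂*(x₁+x₂)) *
      Complex.exp ((lam₁-lam₂)*x₁)) * key
    + (((lam₁-lam₂)^m)⁻¹ * (∑ j ∈ Finset.range (m+1),
        (-1:ℂ)^j * CCn m j * (lam₁-lam₂)^(m-j) * ((x₁-x₂)⁻¹)^j)) * hexp
    + (((lam₁-lam₂)^m)⁻¹ * Complex.exp (lam₂*(x₁+x₂)) * Complex.exp ((lam₁-lam₂)*x₁) *
        (x₁-x₂)^(m+1) * (∑ j ∈ Finset.range (m+1),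
        (-1:ℂ)^j * CCn m j * (lam₁-lam₂)^(m-j) * ((x₁-x₂)⁻¹)^(m+1+j))) * hm'
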